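/- Let p > 3 be a prime, let k be an integer with 1 ≤ k ≤ p-1, and let t be a p-adic integer. Then binom(pt, k) · binom(-1 - pt, k) ≡ -p²t²/k² - pt/k (mod p³) in the ring of p-adic integers. -/

import Mathlib

/-- The generalized binomial coefficient `C(x, n) = x(x-1)⋯(x-n+1)/n!` for a
`p`-adic number `x` (a `p`-adic integer when `x` is). -/
noncomputable def padicChoose {p : ℕ} [Fact p.Prime] (x : ℚ_[p]) (n : ℕ) : ℚ_[p] :=
  (∏ j ∈ Finset.range n, (x - j)) / (n.factorial : ℚ_[p])

lemma prod_norm_sub_le {p : ℕ} [Fact p.Prime] (n : ℕ) (f g : ℕ → ℚ_[p]) (ε : ℝ) (hε : 0 ≤ ε)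
    (hf : ∀ j, ‖f j‖ ≤ 1) (hg : ∀ j, ‖g j‖ ≤ 1) (hfg : ∀ j, ‖f j - g j‖ ≤ ε) :
    ‖(∏ j ∈ Finset.range n, f j) - ∏ j ∈ Finset.range n, g j‖ ≤ ε := by
  induction n with
  | zero => simpa using hε
  | succ n ih =>
    rw [Finset.prod_range_succ, Finset.prod_range_succ]
    have key : (∏ j ∈ Finset.range n, f j) * f n - (∏ j ∈ Finset.range n, g j) * g n
        = ((∏ j ∈ Finset.range n, f j) - ∏ j ∈ Finset.range n, g j) * f n
          + (∏ j ∈ Finset.range n, g j) * (f n - g n) := by ring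
    rw [key]
    have hgp : ‖∏ j ∈ Finset.range n, g j‖ ≤ 1 := by
      rw [norm_prod]
      exact Finset.prod_le_one (fun j _ => norm_nonneg _) (fun j _ => hg j)
    refine le_trans (Padic.nonarchimedean _ _) (max_le ?_ ?_)
    · rw [norm_mul]
      calc ‖_‖ * ‖f n‖ ≤ ε * 1 := mul_le_mul ih (hf n) (norm_nonneg _) hε
        _ = ε := mul_one ε
    · rw [norm_mul]
      calc ‖∏ j ∈ Finset.range n, g j‖ * ‖f n - g n‖ ≤ 1 * ε :=
          mul_le_mul hgp (hfg n) (norm_nonneg _) zero_le_one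
        _ = ε := one_mul ε

/-- For a prime `p > 3`, an integer `1 ≤ k ≤ p-1`, and a `p`-adic integer `t`:
`C(pt, k) · C(-1 - pt, k) ≡ -p²t²/k² - pt/k (mod p³)` in `ℤ_p`,
i.e. the difference has `p`-adic norm at most `p^{-3}`. -/
theorem padicChoose_pt_mul_padicChoose_neg (p : ℕ) [Fact p.Prime] (hp : 3 < p)
    (k : ℕ) (hk1 : 1 ≤ k) (hk2 : k ≤ p - 1) (t : ℤ_[p]) :
    ‖padicChoose ((p : ℚ_[p]) * (t : ℚ_[p])) k *
        padicChoose (-1 - (p : ℚ_[p]) * (t : ℚ_[p])) k -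
      (-((p : ℚ_[p]) ^ 2 * (t : ℚ_[p]) ^ 2) / (k : ℚ_[p]) ^ 2
        - (p : ℚ_[p]) * (t : ℚ_[p]) / (k : ℚ_[p]))‖ ≤ (p : ℝ) ^ (-3 : ℤ) := by
  obtain ⟨m, rfl⟩ : ∃ m, k = m + 1 := ⟨k - 1, (Nat.succ_pred_eq_of_pos hk1).symm⟩
  set k := m + 1 with hkdef
  set x : ℚ_[p] := (p : ℚ_[p]) * (t : ℚ_[p]) with hx
  have hpprime := (Fact.out : p.Prime)
  have hp0 : (0:ℝ) < p := by positivity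
  -- norm of x
  have hxnorm : ‖x‖ ≤ (p : ℝ)^(-1:ℤ) := by
    rw [hx, norm_mul, Padic.norm_p]
    calc (p:ℝ)⁻¹ * ‖(t : ℚ_[p])‖ ≤ (p:ℝ)⁻¹ * 1 := by
          exact mul_le_mul_of_nonneg_left t.2 (by positivity)
      _ = (p:ℝ)^(-1:ℤ) := by rw [mul_one, zpow_neg_one]
  have hp1le : (p:ℝ)^(-1:ℤ) ≤ 1 := by
    rw [zpow_neg_one]
    rw [inv_le_one_iff₀]
    right; exact_mod_cast le_of_lt (by omega : 1 < p)
  have hx1 : ‖x‖ ≤ 1 := le_trans hxnorm hp1le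
  have hnat_norm_le : ∀ n : ℕ, ‖(n:ℚ_[p])‖ ≤ 1 := by
    intro n
    have := Padic.norm_int_le_one (p := p) (n : ℤ)
    push_cast at this
    exact this
  have hfact_unit : ∀ n : ℕ, n ≤ p - 1 → ‖(n.factorial : ℚ_[p])‖ = 1 := by
    intro n hn
    have hnd : ¬ (p:ℤ) ∣ ((n.factorial : ℕ) : ℤ) := by
      rw [Int.natCast_dvd_natCast]
      intro h
      have := (Nat.Prime.dvd_factorial hpprime).mp h
      omega
    have h1 : ‖((n.factorial : ℤ) : ℚ_[p])‖ ≤ 1 := Padic.norm_int_le_one _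
    have h2 : ¬ ‖((n.factorial : ℤ) : ℚ_[p])‖ < 1 := fun h =>
      hnd ((Padic.norm_intCast_lt_one_iff).mp h)
    push_cast at h1 h2
    exact le_antisymm h1 (not_lt.mp h2)
  set P : ℚ_[p] := ∏ j ∈ Finset.range m, (((j:ℚ_[p])+1)^2 - x^2) with hP
  have hAB : (∏ j ∈ Finset.range k, (x - j)) * (∏ j ∈ Finset.range k, (-1 - x - j))
      = -(x * (x + k)) * P := by
    rw [hkdef, Finset.prod_range_succ' (fun j => x - (j:ℕ)) m, Finset.prod_range_succ]
    calc ((∏ j ∈ Finset.range m, (x - ((j+1:ℕ):ℚ_[p]))) * (x - ((0:ℕ):ℚ_[p])))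
          * ((∏ j ∈ Finset.range m, (-1 - x - (j:ℕ))) * (-1 - x - (m:ℕ)))
        = (∏ j ∈ Finset.range m, ((x - ((j+1:ℕ):ℚ_[p])) * (-1 - x - (j:ℕ))))
          * ((x - ((0:ℕ):ℚ_[p])) * (-1 - x - (m:ℕ))) := by
          rw [Finset.prod_mul_distrib]; ring
      _ = P * (-(x * (x + ((m:ℚ_[p]) + 1)))) := by
          have hcongr : ∏ j ∈ Finset.range m, ((x - ((j+1:ℕ):ℚ_[p])) * (-1 - x - (j:ℕ)))
              = P := Finset.prod_congr rfl (fun j _ => by push_cast; ring)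
          rw [hcongr]; push_cast; ring
      _ = -(x * (x + ((m+1:ℕ):ℚ_[p]))) * P := by push_cast; ring
  have hk_ne : ((k:ℕ):ℚ_[p]) ≠ 0 := Nat.cast_ne_zero.mpr (by omega)
  have hmfact_ne : (m.factorial : ℚ_[p]) ≠ 0 := Nat.cast_ne_zero.mpr m.factorial_ne_zero
  have hkf : (k.factorial : ℚ_[p]) = ((k:ℕ):ℚ_[p]) * (m.factorial : ℚ_[p]) := by
    rw [hkdef]; push_cast [Nat.factorial_succ]; ring
  have hmsq : (m.factorial : ℚ_[p])^2 = ∏ j ∈ Finset.range m, ((j:ℚ_[p])+1)^2 := by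
    rw [← Finset.prod_range_add_one_eq_factorial m]
    push_cast [← Finset.prod_pow]
    rfl
  have hx2 : -((p : ℚ_[p]) ^ 2 * (t : ℚ_[p]) ^ 2) = -(x^2) := by rw [hx]; ring
  have hdiff : padicChoose x k * padicChoose (-1 - x) k
      - (-(x^2) / ((k:ℕ):ℚ_[p])^2 - x / ((k:ℕ):ℚ_[p]))
      = (-(x*(x+((k:ℕ):ℚ_[p]))) * (P - (m.factorial : ℚ_[p])^2)) / ((k.factorial : ℚ_[p]))^2 := by
    unfold padicChoose
    rw [div_mul_div_comm, ← sq, hAB, hkf]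
    field_simp
    ring
  rw [hx2, hdiff]
  rw [norm_div, norm_pow, hfact_unit k hk2, one_pow, div_one, norm_mul, norm_neg, norm_mul]
  have hxk : ‖x + ((k:ℕ):ℚ_[p])‖ ≤ 1 :=
    le_trans (Padic.nonarchimedean _ _) (max_le hx1 (hnat_norm_le k))
  have hPbound : ‖P - (m.factorial : ℚ_[p])^2‖ ≤ (p:ℝ)^(-2:ℤ) := by
    rw [hmsq, hP]
    apply prod_norm_sub_le m _ _ _ (by positivity)
    · intro j
      have : ((j:ℚ_[p])+1)^2 - x^2 = ((j:ℚ_[p])+1)^2 + (-(x^2)) := by ring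
      rw [this]
      refine le_trans (Padic.nonarchimedean _ _) (max_le ?_ ?_)
      · rw [norm_pow]
        refine pow_le_one₀ (norm_nonneg _) ?_
        have := hnat_norm_le (j+1); push_cast at this; exact this
      · rw [norm_neg, norm_pow]
        exact pow_le_one₀ (norm_nonneg _) hx1
    · intro j
      rw [norm_pow]
      refine pow_le_one₀ (norm_nonneg _) ?_
      have := hnat_norm_le (j+1); push_cast at this; exact this
    · intro j
      have : ((j:ℚ_[p])+1)^2 - x^2 - ((j:ℚ_[p])+1)^2 = -(x^2) := by ring
      rw [this, norm_neg, norm_pow]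
      calc ‖x‖^2 ≤ ((p:ℝ)^(-1:ℤ))^2 := pow_le_pow_left₀ (norm_nonneg _) hxnorm 2
        _ = (p:ℝ)^(-2:ℤ) := by rw [← zpow_natCast, ← zpow_mul]; norm_num
  calc ‖x‖ * ‖x + ((k:ℕ):ℚ_[p])‖ * ‖P - (m.factorial : ℚ_[p])^2‖
      ≤ ((p:ℝ)^(-1:ℤ) * 1) * (p:ℝ)^(-2:ℤ) := by
        apply mul_le_mul _ hPbound (norm_nonneg _) (by positivity)
        exact mul_le_mul hxnorm hxk (norm_nonneg _) (by positivity)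
    _ = (p:ℝ)^(-3:ℤ) := by
        rw [mul_one, ← zpow_add₀ (ne_of_gt hp0)]
        norm_num
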